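/- Let n be a positive integer, η > 0, Y ∈ ℝⁿ, K_x ∈ ℝ^{n×n} symmetric, and let q₁ ∈ ℝⁿ be a unit eigenvector of K_x with eigenvalue λ₁ > 0. Let c ∈ ℝ with c ≠ 0 and v ∈ ℝⁿ; set F = c·v, E = F − Y, c' = c − (η/n)·⟨E, v⟩, v' = v − (η/n)·c·(K_x E), E' = c'·v' − Y, and Δ := (λ₁/n)·c² − 2/η. Then 2 + ηΔ = (ηλ₁/n)·c² ≠ 0 and ⟨E', q₁⟩ = ( −1 − ηΔ + (η²λ₁(1 + ηΔ))/(n²(2 + ηΔ))·⟨E, F⟩ )·⟨E, q₁⟩ − (η²λ₁)/(n²(2 + ηΔ))·⟨E, F⟩·⟨Y, q₁⟩. -/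

import Mathlib

open Matrix

/-- One-step recursion for the error component along the top kernel
eigendirection, expressed through the Edge-of-Stability excess `Δ`. -/
theorem error_top_component_recursion_Delta
    (n : ℕ) (hn : 0 < n) (η : ℝ) (hη : 0 < η)
    (Y : Fin n → ℝ) (Kx : Matrix (Fin n) (Fin n) ℝ) (hK : Kx.IsSymm)
    (q1 : Fin n → ℝ) (hq1 : q1 ⬝ᵥ q1 = 1)
    (lam1 : ℝ) (hlam1 : 0 < lam1) (heig : Kx.mulVec q1 = lam1 • q1)
    (c : ℝ) (hc : c ≠ 0) (v : Fin n → ℝ)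
    (F E : Fin n → ℝ) (hF : F = c • v) (hE : E = F - Y)
    (c' : ℝ) (hc' : c' = c - (η / n) * (E ⬝ᵥ v))
    (v' : Fin n → ℝ) (hv' : v' = v - ((η / n) * c) • Kx.mulVec E)
    (E' : Fin n → ℝ) (hE' : E' = c' • v' - Y)
    (Δ : ℝ) (hΔ : Δ = (lam1 / n) * c ^ 2 - 2 / η) :
    2 + η * Δ = (η * lam1 / n) * c ^ 2 ∧ (η * lam1 / n) * c ^ 2 ≠ 0 ∧
      E' ⬝ᵥ q1 =
        (-1 - η * Δ
            + (η ^ 2 * lam1 * (1 + η * Δ)) / (n ^ 2 * (2 + η * Δ)) * (E ⬝ᵥ F))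
            * (E ⬝ᵥ q1)
          - (η ^ 2 * lam1) / (n ^ 2 * (2 + η * Δ)) * (E ⬝ᵥ F) * (Y ⬝ᵥ q1) := by
  have hn' : (n : ℝ) ≠ 0 := Nat.cast_ne_zero.mpr hn.ne'
  have hηne : η ≠ 0 := hη.ne'
  have h1 : 2 + η * Δ = (η * lam1 / n) * c ^ 2 := by
    rw [hΔ]; field_simp; ring
  have h2 : (η * lam1 / n) * c ^ 2 ≠ 0 := by
    have : (0:ℝ) < (η * lam1 / n) * c ^ 2 := by positivity
    exact this.ne'
  refine ⟨h1, h2, ?_⟩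
  -- key: (Kx *ᵥ E) ⬝ᵥ q1 = lam1 * (E ⬝ᵥ q1)
  have hKE : (Kx.mulVec E) ⬝ᵥ q1 = lam1 * (E ⬝ᵥ q1) := by
    rw [dotProduct_comm, Matrix.dotProduct_mulVec, ← Matrix.mulVec_transpose,
      hK.eq, heig, smul_dotProduct, dotProduct_comm]
    rfl
  set s := E ⬝ᵥ q1 with hs
  set y := Y ⬝ᵥ q1 with hy
  set a := E ⬝ᵥ v with ha
  have hvq : v ⬝ᵥ q1 = (s + y) / c := by
    have : F ⬝ᵥ q1 = s + y := by
      rw [hE, sub_dotProduct] at hs; linarith [hs]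
    rw [hF, smul_dotProduct, smul_eq_mul] at this
    field_simp
    linarith
  have hEF : E ⬝ᵥ F = c * a := by
    rw [hF, dotProduct_smul, smul_eq_mul, ha]
  have hE'q : E' ⬝ᵥ q1 = c' * (v' ⬝ᵥ q1) - y := by
    rw [hE', sub_dotProduct, smul_dotProduct, smul_eq_mul, hy]
  rw [hE'q, hv', sub_dotProduct, smul_dotProduct, hvq, hKE, hc', hEF, h1, hΔ]
  have hden : (n:ℝ) ^ 2 * ((η * lam1 / n) * c ^ 2) ≠ 0 := by
    have : (0:ℝ) < (n:ℝ) ^ 2 * ((η * lam1 / n) * c ^ 2) := by positivity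
    exact this.ne'
  field_simp
  linear_combination (c^2*η^2*a*s*lam1 - (n:ℝ)*c^3*η*s*lam1) * mul_inv_cancel₀ hn'
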